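/- arXiv:2412.00548 — 3 statements merged into one kernel-verified Lean document; each statement's English description precedes it below -/
import Mathlib

section
/- Let n ≥ 1, k ≥ 1, let A₁, …, A_k be real symmetric n×n matrices, and b ∈ ℝᵏ. Suppose λ* ∈ ℝᵏ is such that P* = Iₙ + Σᵢ λᵢ*Aᵢ is positive semidefinite, and suppose m* ∈ ℝⁿ satisfies both the constraints (1/2)m*ᵀAᵢm* = bᵢ for all i ∈ [1,k] and the stationarity condition P*m* = 0. Then m* is a global minimizer: for every m ∈ ℝⁿ with (1/2)mᵀAᵢm = bᵢ for all i, one has (1/2)‖m‖² ≥ (1/2)‖m*‖², and moreover (1/2)‖m*‖² = −λ*ᵀb. -/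
open Matrix

lemma qcqp_quad_expand (n k : ℕ) (A : Fin k → Matrix (Fin n) (Fin n) ℝ)
    (lam : Fin k → ℝ) (m : Fin n → ℝ) :
    m ⬝ᵥ ((1 : Matrix (Fin n) (Fin n) ℝ) + ∑ i, lam i • A i).mulVec m
      = m ⬝ᵥ m + ∑ i, lam i * (m ⬝ᵥ (A i).mulVec m) := by
  rw [add_mulVec, dotProduct_add, one_mulVec]
  congr 1
  rw [show (∑ i, lam i • A i) *ᵥ m = ∑ i, (lam i • A i) *ᵥ m from
    map_sum (Matrix.mulVec.addMonoidHomLeft m) _ Finset.univ]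
  have hds : m ⬝ᵥ ∑ i, (lam i • A i) *ᵥ m = ∑ i, m ⬝ᵥ (lam i • A i) *ᵥ m := by
    simp [dotProduct, Finset.sum_apply, Finset.mul_sum]
    exact Finset.sum_comm
  rw [hds]
  refine Finset.sum_congr rfl fun i _ => ?_
  show m ⬝ᵥ (lam i • A i).mulVec m = _
  rw [smul_mulVec, dotProduct_smul, smul_eq_mul]

/-- Sufficient condition for global optimality in the homogeneous QCQP
`min ½‖m‖² s.t. ½mᵀAᵢm = bᵢ`: if `P* = I + Σᵢ λᵢ*Aᵢ ⪰ 0` and `m*` is feasible with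
`P*m* = 0`, then `m*` is a global minimizer and `½‖m*‖² = −λ*ᵀb`. -/
theorem qcqp_global_optimality (n k : ℕ) (hn : 1 ≤ n) (hk : 1 ≤ k)
    (A : Fin k → Matrix (Fin n) (Fin n) ℝ) (hA : ∀ i, (A i).IsSymm)
    (b lam : Fin k → ℝ)
    (hP : ((1 : Matrix (Fin n) (Fin n) ℝ) + ∑ i, lam i • A i).PosSemidef)
    (mstar : Fin n → ℝ)
    (hfeas : ∀ i, (1 / 2) * (mstar ⬝ᵥ (A i).mulVec mstar) = b i)
    (hstat : ((1 : Matrix (Fin n) (Fin n) ℝ) + ∑ i, lam i • A i).mulVec mstar = 0) :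
    (∀ m : Fin n → ℝ, (∀ i, (1 / 2) * (m ⬝ᵥ (A i).mulVec m) = b i) →
        (1 / 2) * (m ⬝ᵥ m) ≥ (1 / 2) * (mstar ⬝ᵥ mstar)) ∧
      (1 / 2) * (mstar ⬝ᵥ mstar) = -(lam ⬝ᵥ b) := by
  have hstar : (1 / 2) * (mstar ⬝ᵥ mstar) = -(lam ⬝ᵥ b) := by
    have h0 : mstar ⬝ᵥ ((1 : Matrix (Fin n) (Fin n) ℝ) + ∑ i, lam i • A i).mulVec mstar = 0 := by
      rw [hstat, dotProduct_zero]
    rw [qcqp_quad_expand] at h0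
    have hsum : ∑ i, lam i * (mstar ⬝ᵥ (A i).mulVec mstar) = ∑ i, lam i * (2 * b i) := by
      refine Finset.sum_congr rfl fun i _ => ?_
      rw [← hfeas i]; ring
    rw [hsum] at h0
    have : ∑ i, lam i * (2 * b i) = 2 * ∑ i, lam i * b i := by
      rw [Finset.mul_sum]; exact Finset.sum_congr rfl fun i _ => by ring
    rw [this] at h0
    simp only [dotProduct] at h0 ⊢
    linarith
  refine ⟨fun m hm => ?_, hstar⟩
  have hpos := hP.dotProduct_mulVec_nonneg m
  rw [show star m = m from rfl, qcqp_quad_expand] at hpos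
  have hsum : ∑ i, lam i * (m ⬝ᵥ (A i).mulVec m) = 2 * ∑ i, lam i * b i := by
    rw [Finset.mul_sum]
    refine Finset.sum_congr rfl fun i _ => ?_
    rw [← hm i]; ring
  rw [hsum] at hpos
  rw [hstar]
  simp only [dotProduct] at hpos ⊢
  linarith
end

section
/- Let n ≥ 1, k ≥ 1, let A₁, …, A_k be real symmetric 3n×3n matrices, and b ∈ ℝᵏ (encoding the linear constraints tr(𝔛Aᵢ) = bᵢ on the symmetric matrix variable 𝔛). Suppose P is a symmetric positive semidefinite 3n×3n matrix of the form P = I + Σᵢ λᵢAᵢ for some λ ∈ ℝᵏ, and suppose s*, c* ∈ ℝ^{3n} are such that 𝔛* = s*s*ᵀ + c*c*ᵀ satisfies tr(𝔛*Aᵢ) = bᵢ for all i and P𝔛* = 0. Then (s*, c*) globally minimizes (1/2)(‖s‖² + ‖c‖²) over all (s, c) ∈ ℝ^{3n} × ℝ^{3n} with tr((ssᵀ + ccᵀ)Aᵢ) = bᵢ for all i ∈ [1,k]. -/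
open Matrix

lemma tr_vv {m : Type*} [Fintype m] (v : m → ℝ) (M : Matrix m m ℝ) :
    Matrix.trace (Matrix.vecMulVec v v * M) = v ⬝ᵥ (M *ᵥ v) := by
  simp only [Matrix.trace, Matrix.diag, Matrix.mul_apply, Matrix.vecMulVec_apply,
    dotProduct, Matrix.mulVec, dotProduct]
  rw [Finset.sum_comm]
  congr 1; ext j; rw [Finset.mul_sum]; congr 1; ext i; ring

lemma tr_vv_one {m : Type*} [Fintype m] [DecidableEq m] (v : m → ℝ) :
    Matrix.trace (Matrix.vecMulVec v v) = v ⬝ᵥ v := by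
  simp [Matrix.trace, Matrix.diag, Matrix.vecMulVec_apply, dotProduct]

/-- N-agent power-optimal dipole allocation (Theorem 2): if the symmetric PSD matrix
`P = I + Σᵢ λᵢAᵢ` and `𝔛* = s*s*ᵀ + c*c*ᵀ` satisfies the linear constraints
`tr(𝔛*Aᵢ) = bᵢ` and `P𝔛* = 0`, then `(s*, c*)` globally minimizes `½(‖s‖² + ‖c‖²)`
over all `(s, c)` with `tr((ssᵀ + ccᵀ)Aᵢ) = bᵢ`. -/
theorem n_agent_power_optimal (n k : ℕ) (hn : 1 ≤ n) (hk : 1 ≤ k)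
    (A : Fin k → Matrix (Fin (3 * n)) (Fin (3 * n)) ℝ) (hA : ∀ i, (A i).IsSymm)
    (b : Fin k → ℝ)
    (P : Matrix (Fin (3 * n)) (Fin (3 * n)) ℝ) (hPsymm : P.IsSymm)
    (hPsd : P.PosSemidef)
    (hform : ∃ lam : Fin k → ℝ, P = 1 + ∑ i, lam i • A i)
    (sstar cstar : Fin (3 * n) → ℝ)
    (hfeas : ∀ i, Matrix.trace
      ((Matrix.vecMulVec sstar sstar + Matrix.vecMulVec cstar cstar) * A i) = b i)
    (hstat : P * (Matrix.vecMulVec sstar sstar + Matrix.vecMulVec cstar cstar) = 0) :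
    ∀ s c : Fin (3 * n) → ℝ,
      (∀ i, Matrix.trace ((Matrix.vecMulVec s s + Matrix.vecMulVec c c) * A i) = b i) →
      (1 / 2) * (sstar ⬝ᵥ sstar + cstar ⬝ᵥ cstar) ≤ (1 / 2) * (s ⬝ᵥ s + c ⬝ᵥ c) := by
  obtain ⟨lam, hP⟩ := hform
  -- key expansion of trace(𝔛 P) for any feasible (s, c)
  have key : ∀ s c : Fin (3 * n) → ℝ,
      (∀ i, Matrix.trace ((Matrix.vecMulVec s s + Matrix.vecMulVec c c) * A i) = b i) →
      Matrix.trace ((Matrix.vecMulVec s s + Matrix.vecMulVec c c) * P)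
        = (s ⬝ᵥ s + c ⬝ᵥ c) + ∑ i, lam i * b i := by
    intro s c hf
    rw [hP, Matrix.mul_add, Matrix.trace_add, Matrix.mul_one, Matrix.mul_sum,
      Matrix.trace_sum]
    have h1 : ∀ i : Fin k,
        Matrix.trace ((Matrix.vecMulVec s s + Matrix.vecMulVec c c) * (lam i • A i))
          = lam i * b i := by
      intro i
      rw [Matrix.mul_smul, Matrix.trace_smul, hf i, smul_eq_mul]
    rw [Finset.sum_congr rfl (fun i _ => h1 i)]
    simp [Matrix.trace_add, tr_vv_one, Matrix.add_mul]
  intro s c hf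
  have h2 := key s c hf
  have h3 := key sstar cstar hfeas
  -- trace(𝔛* P) = 0 since P𝔛* = 0
  have h4 : Matrix.trace
      ((Matrix.vecMulVec sstar sstar + Matrix.vecMulVec cstar cstar) * P) = 0 := by
    rw [Matrix.trace_mul_comm, hstat, Matrix.trace_zero]
  -- trace(𝔛 P) ≥ 0 by positive semidefiniteness of P
  have h5 : 0 ≤ Matrix.trace
      ((Matrix.vecMulVec s s + Matrix.vecMulVec c c) * P) := by
    rw [Matrix.add_mul, Matrix.trace_add, tr_vv, tr_vv]
    have hs := hPsd.dotProduct_mulVec_nonneg s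
    have hc := hPsd.dotProduct_mulVec_nonneg c
    simp only [star_trivial] at hs hc
    exact add_nonneg hs hc
  rw [h2] at h5
  rw [h3] at h4
  nlinarith [h4, h5]
end

section
/- Let d > 0 and let Q_d ∈ ℝ^{6×9} be the matrix (1/d⁴)·[row₁ = (−6,0,0,0,3,0,0,0,3); row₂ = (0,3,0,3,0,0,0,0,0); row₃ = (0,0,3,0,0,0,3,0,0); row₄ = d·(0,0,0,0,0,1,0,−1,0); row₅ = d·(0,0,2,0,0,0,1,0,0); row₆ = d·(0,−2,0,−1,0,0,0,0,0)]. Let μ₁, μ₂, μ₃, θ₂, θ₃ ∈ ℝ and set s₀ = (μ₁, μ₂cosθ₂, μ₃cosθ₃) ∈ ℝ³ and c₀ = (0, μ₂sinθ₂, μ₃sinθ₃) ∈ ℝ³. If μ₁μ₂μ₃ sin(θ₂ − θ₃) ≠ 0, then the 6×6 matrix Q_d·([s₀, c₀] ⊗ I₃) is invertible, where [s₀, c₀] ∈ ℝ^{3×2} has columns s₀, c₀ and ⊗ is the Kronecker product of matrices. -/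
open Matrix Kronecker

/-- The far-field coefficient matrix `Q_d ∈ ℝ^{6×9}` in the line-of-sight frame, with
columns indexed by `Fin 3 × Fin 3` (pair `(a, b)` standing for linear index `3a + b`
of the Kronecker/vec ordering). -/
noncomputable def Qd (d : ℝ) : Matrix (Fin 6) (Fin 3 × Fin 3) ℝ :=
  Matrix.of fun i p =>
    (1 / d ^ 4) *
      (![![![-6, 0, 0], ![0, 3, 0], ![0, 0, 3]],
         ![![0, 3, 0], ![3, 0, 0], ![0, 0, 0]],
         ![![0, 0, 3], ![0, 0, 0], ![3, 0, 0]],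
         ![![0, 0, 0], ![0, 0, d], ![0, -d, 0]],
         ![![0, 0, 2 * d], ![0, 0, 0], ![d, 0, 0]],
         ![![0, -2 * d, 0], ![-d, 0, 0], ![0, 0, 0]]] i p.1 p.2)

private lemma det_fin_four' {R : Type*} [CommRing R] (A : Matrix (Fin 4) (Fin 4) R) :
    Matrix.det A =
      A 0 0 * (A 1 1 * A 2 2 * A 3 3 - A 1 1 * A 2 3 * A 3 2 - A 1 2 * A 2 1 * A 3 3
        + A 1 2 * A 2 3 * A 3 1 + A 1 3 * A 2 1 * A 3 2 - A 1 3 * A 2 2 * A 3 1)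
      - A 0 1 * (A 1 0 * A 2 2 * A 3 3 - A 1 0 * A 2 3 * A 3 2 - A 1 2 * A 2 0 * A 3 3
        + A 1 2 * A 2 3 * A 3 0 + A 1 3 * A 2 0 * A 3 2 - A 1 3 * A 2 2 * A 3 0)
      + A 0 2 * (A 1 0 * A 2 1 * A 3 3 - A 1 0 * A 2 3 * A 3 1 - A 1 1 * A 2 0 * A 3 3
        + A 1 1 * A 2 3 * A 3 0 + A 1 3 * A 2 0 * A 3 1 - A 1 3 * A 2 1 * A 3 0)
      - A 0 3 * (A 1 0 * A 2 1 * A 3 2 - A 1 0 * A 2 2 * A 3 1 - A 1 1 * A 2 0 * A 3 2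
        + A 1 1 * A 2 2 * A 3 0 + A 1 2 * A 2 0 * A 3 1 - A 1 2 * A 2 1 * A 3 0) := by
  rw [det_succ_row_zero]
  simp only [Fin.sum_univ_succ, Fin.sum_univ_zero, det_fin_three, submatrix_apply,
    Fin.succ_zero_eq_one, Fin.succ_one_eq_two, Fin.zero_succAbove, Fin.succ_succAbove_zero,
    Fin.succ_succAbove_one, Fin.succ_succAbove_succ, Fin.val_zero, Fin.val_succ,
    show (Fin.succ 2 : Fin 4) = 3 from rfl,
    show ∀ j : Fin 3, Fin.succAbove (2 : Fin 4) j = ![0,1,3] j from by decide,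
    show ∀ j : Fin 3, Fin.succAbove (3 : Fin 4) j = ![0,1,2] j from by decide,
    show ∀ j : Fin 3, Fin.succAbove (1 : Fin 4) j = ![0,2,3] j from by decide,
    Matrix.cons_val_zero, Matrix.cons_val_one, Matrix.head_cons, Matrix.cons_val_two,
    Matrix.tail_cons]
  norm_num
  ring

/-- Row equivalence for the block decomposition. -/
private def eRow : Fin 6 ≃ (Fin 2 ⊕ Fin 4) where
  toFun := ![Sum.inl 0, Sum.inr 0, Sum.inr 1, Sum.inl 1, Sum.inr 2, Sum.inr 3]
  invFun := Sum.elim ![0, 3] ![1, 2, 4, 5]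
  left_inv := by decide
  right_inv := by decide

/-- Column equivalence for the block decomposition. -/
private def eCol : Fin 6 ≃ (Fin 2 ⊕ Fin 4) where
  toFun := ![Sum.inr 0, Sum.inr 1, Sum.inr 2, Sum.inr 3, Sum.inl 0, Sum.inl 1]
  invFun := Sum.elim ![4, 5] ![0, 1, 2, 3]
  left_inv := by decide
  right_inv := by decide

private lemma detN (d μ₁ a b p q : ℝ) : Matrix.det
      !![-6*μ₁, 3*a, 3*b, 0, 3*p, 3*q;
         3*a, 3*μ₁, 0, 3*p, 0, 0;
         3*b, 0, 3*μ₁, 3*q, 0, 0;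
         0, -(d*b), d*a, 0, -(d*q), d*p;
         d*b, 0, 2*d*μ₁, d*q, 0, 0;
         -(d*a), -(2*d*μ₁), 0, -(d*p), 0, 0] =
      27 * d^3 * μ₁^2 * (a*q - b*p) * (p^2 + q^2) := by
  set A : Matrix (Fin 2) (Fin 2) ℝ := !![3*p, 3*q; -(d*q), d*p] with hA
  set B : Matrix (Fin 2) (Fin 4) ℝ := !![-6*μ₁, 3*a, 3*b, 0; 0, -(d*b), d*a, 0] with hB
  set D : Matrix (Fin 4) (Fin 4) ℝ :=
    !![3*a, 3*μ₁, 0, 3*p; 3*b, 0, 3*μ₁, 3*q; d*b, 0, 2*d*μ₁, d*q;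
       -(d*a), -(2*d*μ₁), 0, -(d*p)] with hD
  have hsub : (!![-6*μ₁, 3*a, 3*b, 0, 3*p, 3*q;
         3*a, 3*μ₁, 0, 3*p, 0, 0;
         3*b, 0, 3*μ₁, 3*q, 0, 0;
         0, -(d*b), d*a, 0, -(d*q), d*p;
         d*b, 0, 2*d*μ₁, d*q, 0, 0;
         -(d*a), -(2*d*μ₁), 0, -(d*p), 0, 0] : Matrix (Fin 6) (Fin 6) ℝ) =
      ((Matrix.fromBlocks A B 0 D).submatrix eRow eRow).submatrix
        id (eCol.trans eRow.symm) := by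
    ext i j
    fin_cases i <;> fin_cases j <;> rfl
  rw [hsub, Matrix.det_permute', Matrix.det_submatrix_equiv_self,
    Matrix.det_fromBlocks_zero₂₁,
    show ((Equiv.Perm.sign (eCol.trans eRow.symm) : ℤ) : ℝ) = 1 from by
      norm_num [show Equiv.Perm.sign (eCol.trans eRow.symm) = 1 from by decide], one_mul]
  rw [Matrix.det_fin_two, det_fin_four', hA, hD]
  simp only [Matrix.of_apply, Matrix.cons_val', Matrix.cons_val_zero, Matrix.cons_val_one,
    Matrix.cons_val_two, Matrix.cons_val_three, Matrix.empty_val', Matrix.cons_val_fin_one,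
    Matrix.head_cons, Matrix.tail_cons, Matrix.head_fin_const]
  ring

set_option maxHeartbeats 2000000 in
set_option maxRecDepth 100000 in
/-- Nonsingularity of the decentralized two-agent dipole allocation: if
`μ₁μ₂μ₃ sin(θ₂ − θ₃) ≠ 0`, then `Q_d·([s₀, c₀] ⊗ I₃)` is invertible, where
`s₀ = (μ₁, μ₂cosθ₂, μ₃cosθ₃)`, `c₀ = (0, μ₂sinθ₂, μ₃sinθ₃)` are the columns of the
3×2 matrix `[s₀, c₀]` and `⊗` is the Kronecker product of matrices. -/
theorem decentralized_allocation_invertible (d : ℝ) (hd : 0 < d)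
    (μ₁ μ₂ μ₃ θ₂ θ₃ : ℝ) (h : μ₁ * μ₂ * μ₃ * Real.sin (θ₂ - θ₃) ≠ 0) :
    IsUnit (Qd d *
      (Matrix.reindex (Equiv.refl (Fin 3 × Fin 3))
        ((finProdFinEquiv : Fin 2 × Fin 3 ≃ Fin (2 * 3)).trans
          (finCongr (by norm_num : 2 * 3 = 6)))
        ((Matrix.of fun i j =>
            ![![μ₁, μ₂ * Real.cos θ₂, μ₃ * Real.cos θ₃] i,
              ![0, μ₂ * Real.sin θ₂, μ₃ * Real.sin θ₃] i] j :
            Matrix (Fin 3) (Fin 2) ℝ) ⊗ₖ (1 : Matrix (Fin 3) (Fin 3) ℝ)))).det := by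
  have hd0 : d ≠ 0 := ne_of_gt hd
  set a := μ₂ * Real.cos θ₂ with ha
  set b := μ₃ * Real.cos θ₃ with hb
  set p := μ₂ * Real.sin θ₂ with hp
  set q := μ₃ * Real.sin θ₃ with hq
  have e0 : (finProdFinEquiv : Fin 2 × Fin 3 ≃ Fin (2*3)).symm 0 = (0,0) := by decide
  have e1 : (finProdFinEquiv : Fin 2 × Fin 3 ≃ Fin (2*3)).symm 1 = (0,1) := by decide
  have e2 : (finProdFinEquiv : Fin 2 × Fin 3 ≃ Fin (2*3)).symm 2 = (0,2) := by decide
  have e3 : (finProdFinEquiv : Fin 2 × Fin 3 ≃ Fin (2*3)).symm 3 = (1,0) := by decide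
  have e4 : (finProdFinEquiv : Fin 2 × Fin 3 ≃ Fin (2*3)).symm 4 = (1,1) := by decide
  have e5 : (finProdFinEquiv : Fin 2 × Fin 3 ≃ Fin (2*3)).symm (Fin.succ 4) = (1,2) := by decide
  have e5' : (finProdFinEquiv : Fin 2 × Fin 3 ≃ Fin (2*3)).symm 5 = (1,2) := by decide
  have key : (Qd d *
      (Matrix.reindex (Equiv.refl (Fin 3 × Fin 3))
        ((finProdFinEquiv : Fin 2 × Fin 3 ≃ Fin (2 * 3)).trans
          (finCongr (by norm_num : 2 * 3 = 6)))
        ((Matrix.of fun i j =>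
            ![![μ₁, a, b] i, ![0, p, q] i] j :
            Matrix (Fin 3) (Fin 2) ℝ) ⊗ₖ (1 : Matrix (Fin 3) (Fin 3) ℝ)))) =
      (1/d^4 : ℝ) • !![-6*μ₁, 3*a, 3*b, 0, 3*p, 3*q;
         3*a, 3*μ₁, 0, 3*p, 0, 0;
         3*b, 0, 3*μ₁, 3*q, 0, 0;
         0, -(d*b), d*a, 0, -(d*q), d*p;
         d*b, 0, 2*d*μ₁, d*q, 0, 0;
         -(d*a), -(2*d*μ₁), 0, -(d*p), 0, 0] := by
    ext i j
    rw [Matrix.mul_apply]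
    fin_cases i <;> fin_cases j <;>
      simp [Qd, e0, e1, e2, e3, e4, e5, e5', show (5:Fin 6) = Fin.succ 4 from rfl,
        Matrix.cons_val_succ, Fintype.sum_prod_type, Fin.sum_univ_succ, Matrix.one_apply,
        Matrix.vecHead, Matrix.vecTail] <;> try
      ring
  rw [key, Matrix.det_smul, isUnit_iff_ne_zero, detN]
  have hμ₁ : μ₁ ≠ 0 := fun hh => h (by simp [hh])
  have hμ₂ : μ₂ ≠ 0 := fun hh => h (by simp [hh])
  have hμ₃ : μ₃ ≠ 0 := fun hh => h (by simp [hh])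
  have hs : Real.sin (θ₂ - θ₃) ≠ 0 := fun hh => h (by simp [hh])
  have h1 : a*q - b*p = -(μ₂ * μ₃ * Real.sin (θ₂ - θ₃)) := by
    rw [ha, hb, hp, hq, Real.sin_sub]; ring
  have h2 : a*q - b*p ≠ 0 := by
    rw [h1]; simp [hμ₂, hμ₃, hs]
  have h3 : p^2 + q^2 ≠ 0 := by
    intro hh
    have hp0 : p = 0 := by nlinarith [sq_nonneg p, sq_nonneg q]
    have hq0 : q = 0 := by nlinarith [sq_nonneg p, sq_nonneg q]
    have hs2 : Real.sin θ₂ = 0 := by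
      rcases mul_eq_zero.mp (hp ▸ hp0) with h' | h'
      · exact absurd h' hμ₂
      · exact h'
    have hs3 : Real.sin θ₃ = 0 := by
      rcases mul_eq_zero.mp (hq ▸ hq0) with h' | h'
      · exact absurd h' hμ₃
      · exact h'
    exact hs (by rw [Real.sin_sub, hs2, hs3]; ring)
  have hnum : (27 * d^3 * μ₁^2 * (a*q - b*p) * (p^2 + q^2)) ≠ 0 :=
    mul_ne_zero (mul_ne_zero (mul_ne_zero (mul_ne_zero (by norm_num) (pow_ne_zero _ hd0))
      (pow_ne_zero _ hμ₁)) h2) h3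
  exact mul_ne_zero (pow_ne_zero _ (by positivity)) hnum
end
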